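/- arXiv:1404.3628 — 2 statements merged into one kernel-verified Lean document; each statement's English description precedes it below -/
import Mathlib

section
/- Let d ≥ 2 and let P be the projector onto the antisymmetric subspace of ℂ^d ⊗ ℂ^d, realized as the matrix P = (1/2)(1 − F) indexed by (Fin d × Fin d), where F is the swap matrix with entries F[(i,j),(k,l)] = δ_{il}·δ_{jk}. Then for every separable density matrix σ on ℂ^d ⊗ ℂ^d, the real part of Tr(P·σ) is at most √3/2 (i.e. Tr(P·σ) ≤ √(3/4)). -/
open Matrix Kronecker ComplexOrder

/-- The swap matrix on `ℂ^d ⊗ ℂ^d`, with entries `F[(i,j),(k,l)] = δ_{il}·δ_{jk}`. -/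
noncomputable def swapMat (d : ℕ) : Matrix (Fin d × Fin d) (Fin d × Fin d) ℂ :=
  fun p q => (if p.1 = q.2 then 1 else 0) * (if p.2 = q.1 then 1 else 0)

/-- The projector onto the antisymmetric subspace of `ℂ^d ⊗ ℂ^d`: `P = (1/2)(1 - F)`. -/
noncomputable def antiProj (d : ℕ) : Matrix (Fin d × Fin d) (Fin d × Fin d) ℂ :=
  (1 / 2 : ℂ) • ((1 : Matrix (Fin d × Fin d) (Fin d × Fin d) ℂ) - swapMat d)

/-- A density matrix: positive semidefinite with trace 1. -/
def IsDensityMatrix {ι : Type} [Fintype ι] [DecidableEq ι] (ρ : Matrix ι ι ℂ) : Prop :=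
  ρ.PosSemidef ∧ ρ.trace = 1

/-- A separable state on a bipartite system `ι ⊗ ι`: a finite convex combination of
Kronecker products of density matrices. -/
def IsSeparableState {ι : Type} [Fintype ι] [DecidableEq ι]
    (σ : Matrix (ι × ι) (ι × ι) ℂ) : Prop :=
  ∃ (m : ℕ) (p : Fin m → ℝ) (ρ τ : Fin m → Matrix ι ι ℂ),
    (∀ j, 0 ≤ p j) ∧ (∑ j, p j = 1) ∧
    (∀ j, IsDensityMatrix (ρ j)) ∧ (∀ j, IsDensityMatrix (τ j)) ∧
    σ = ∑ j, (p j : ℂ) • (ρ j ⊗ₖ τ j)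


lemma psd_trace_nonneg {ι : Type} [Fintype ι] [DecidableEq ι] {A : Matrix ι ι ℂ}
    (hA : A.PosSemidef) : 0 ≤ A.trace := by
  rw [Matrix.trace]
  apply Finset.sum_nonneg
  intro i _
  have := hA.dotProduct_mulVec_nonneg (Pi.single i 1)
  simpa [Matrix.mulVec, dotProduct, Pi.single_apply] using this

open scoped MatrixOrder in
lemma psd_mul_trace_nonneg {ι : Type} [Fintype ι] [DecidableEq ι] {A B : Matrix ι ι ℂ}
    (hA : A.PosSemidef) (hB : B.PosSemidef) : 0 ≤ (A * B).trace := by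
  have h1 : A = CFC.sqrt A * CFC.sqrt A := (CFC.sqrt_mul_sqrt_self A hA.nonneg).symm
  calc (0:ℂ) ≤ (CFC.sqrt A * B * CFC.sqrt A).trace := by
        have := hB.mul_mul_conjTranspose_same (CFC.sqrt A)
        rw [(CFC.sqrt_nonneg A).posSemidef.1.eq] at this
        exact psd_trace_nonneg this
    _ = (A * B).trace := by
        rw [Matrix.trace_mul_cycle, ← h1]

lemma trace_swap_kron {d : ℕ} (ρ τ : Matrix (Fin d) (Fin d) ℂ) :
    (swapMat d * (ρ ⊗ₖ τ)).trace = (ρ * τ).trace := by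
  simp only [Matrix.trace, Matrix.diag, Matrix.mul_apply, swapMat, kroneckerMap_apply,
    Fintype.sum_prod_type, ite_mul, one_mul, zero_mul]
  simp only [Finset.sum_ite_eq, Finset.sum_ite_eq', Finset.mem_univ, if_true]
  rw [Finset.sum_comm]

/-- For every separable density matrix `σ` on `ℂ^d ⊗ ℂ^d` (`d ≥ 2`), the overlap with the
antisymmetric projector satisfies `Re Tr(P·σ) ≤ √3/2 = √(3/4)`. -/
theorem antisymmetric_overlap_separable_le (d : ℕ) (hd : 2 ≤ d)
    (σ : Matrix (Fin d × Fin d) (Fin d × Fin d) ℂ)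
    (hσ : IsDensityMatrix σ) (hsep : IsSeparableState σ) :
    ((antiProj d * σ).trace).re ≤ Real.sqrt 3 / 2 := by
  obtain ⟨m, p, ρ, τ, hp, hps, hρ, hτ, hσeq⟩ := hsep
  have ht : 0 ≤ (swapMat d * σ).trace := by
    rw [hσeq, Matrix.mul_sum, Matrix.trace_sum]
    apply Finset.sum_nonneg
    intro j _
    rw [Matrix.mul_smul, Matrix.trace_smul, trace_swap_kron, smul_eq_mul]
    exact mul_nonneg (by exact_mod_cast hp j) (psd_mul_trace_nonneg (hρ j).1 (hτ j).1)
  have htr : (antiProj d * σ).trace = (1/2 : ℂ) * (1 - (swapMat d * σ).trace) := by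
    rw [antiProj, Matrix.smul_mul, Matrix.trace_smul, Matrix.sub_mul, Matrix.trace_sub,
      Matrix.one_mul, hσ.2, smul_eq_mul]
  have htre : 0 ≤ ((swapMat d * σ).trace).re := by
    simpa using (Complex.le_def.mp ht).1
  have hs3 : (1:ℝ) ≤ Real.sqrt 3 := by
    nlinarith [Real.sq_sqrt (by norm_num : (0:ℝ) ≤ 3), Real.sqrt_nonneg 3]
  rw [htr, show (1/2:ℂ) = ((1/2:ℝ):ℂ) by norm_num, Complex.re_ofReal_mul, Complex.sub_re,
    Complex.one_re]
  nlinarith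
end

section
/- Let d ≥ 27 be even and let P = (1/2)(1 − F) be the antisymmetric projector on ℂ^d ⊗ ℂ^d. Then for every separable density matrix σ on ℂ^d ⊗ ℂ^d with t = Re Tr(P·σ) > 0, one has −log t > 2 · log((d+2)/d); and for every odd d ≥ 27 and every such σ, −log t > log((d+3)/(d−1)). In words: the 0-relative entropy of the totally antisymmetric state relative to any separable state strictly exceeds the quantum conditional mutual information I(A:B|C)_{ρ} of the state ρ_{ABC} = P_k/d_k (k = ⌈(d+1)/2⌉) once d ≥ 27. -/
open Matrix Kronecker ComplexOrder

lemma psd_diag_nonneg {n : Type} [Fintype n] [DecidableEq n] {A : Matrix n n ℂ}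
    (hA : A.PosSemidef) (i : n) : 0 ≤ A i i := by
  exact hA.diag_nonneg

lemma psd_trace_re_nonneg {n : Type} [Fintype n] [DecidableEq n] {A : Matrix n n ℂ}
    (hA : A.PosSemidef) : 0 ≤ A.trace.re := by
  rw [Matrix.trace]
  simp only [Complex.re_sum]
  exact Finset.sum_nonneg fun i _ => by
    have := psd_diag_nonneg hA i
    rw [Complex.le_def] at this; simpa using this.1

open scoped MatrixOrder in
lemma trace_mul_psd_re_nonneg {n : Type} [Fintype n] [DecidableEq n]
    {A B : Matrix n n ℂ} (hA : A.PosSemidef) (hB : B.PosSemidef) :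
    0 ≤ (A * B).trace.re := by
  obtain ⟨X, hX⟩ := CStarAlgebra.nonneg_iff_eq_star_mul_self.mp hA.nonneg
  have h2 : (A * B).trace = (X * B * Xᴴ).trace := by
    rw [hX, star_eq_conjTranspose, Matrix.mul_assoc, Matrix.trace_mul_comm]
  have h3 : (X * B * Xᴴ).PosSemidef := hB.mul_mul_conjTranspose_same X
  rw [h2]
  exact psd_trace_re_nonneg h3

/-- For `d ≥ 27` and any separable density matrix `σ` on `ℂ^d ⊗ ℂ^d` with positive
overlap `t = Re Tr(P·σ)`, the 0-relative entropy `−log t` of the totally antisymmetric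
state relative to `σ` strictly exceeds the quantum conditional mutual information
`I(A:B|C)` of `ρ_{ABC} = P_k/d_k` (`k = ⌈(d+1)/2⌉`): namely `2·log((d+2)/d)` for `d`
even and `log((d+3)/(d−1))` for `d` odd. -/
theorem zero_relative_entropy_gt_cmi (d : ℕ) (hd : 27 ≤ d)
    (σ : Matrix (Fin d × Fin d) (Fin d × Fin d) ℂ)
    (hσ : IsDensityMatrix σ) (hsep : IsSeparableState σ)
    (t : ℝ) (ht : t = ((antiProj d * σ).trace).re) (htpos : 0 < t) :
    (Even d → -Real.log t > 2 * Real.log (((d : ℝ) + 2) / (d : ℝ))) ∧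
    (Odd d → -Real.log t > Real.log (((d : ℝ) + 3) / ((d : ℝ) - 1))) := by
  obtain ⟨m, p, ρ, τ, hp, hps, hρ, hτ, hσeq⟩ := hsep
  -- swap overlap is nonnegative
  have hswap : 0 ≤ (swapMat d * σ).trace.re := by
    rw [hσeq, Finset.mul_sum, Matrix.trace_sum]
    simp only [mul_smul_comm, Matrix.trace_smul, trace_swap_kron]
    rw [Complex.re_sum]
    refine Finset.sum_nonneg fun j _ => ?_
    have := trace_mul_psd_re_nonneg (hρ j).1 (hτ j).1
    simpa [Complex.smul_re] using mul_nonneg (hp j) this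
  -- t ≤ 1/2
  have ht2 : t ≤ 1 / 2 := by
    have hPσ : antiProj d * σ = (1 / 2 : ℂ) • (σ - swapMat d * σ) := by
      rw [antiProj, Matrix.smul_mul, Matrix.sub_mul, Matrix.one_mul]
    rw [ht, hPσ, Matrix.trace_smul, Matrix.trace_sub, hσ.2, smul_eq_mul]
    have heq : ((1 / 2 : ℂ) * (1 - (swapMat d * σ).trace)).re
        = 1 / 2 * (1 - (swapMat d * σ).trace.re) := by
      simp [Complex.mul_re, Complex.sub_re]
    rw [heq]
    nlinarith [hswap]
  have hlog : Real.log 2 ≤ -Real.log t := by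
    have := Real.log_le_log htpos ht2
    rw [Real.log_div one_ne_zero (by norm_num), Real.log_one] at this
    linarith
  have hdr : (27 : ℝ) ≤ (d : ℝ) := by exact_mod_cast hd
  constructor
  · intro _
    have hr0 : 0 < ((d : ℝ) + 2) / (d : ℝ) := by positivity
    have hsq : (((d : ℝ) + 2) / (d : ℝ)) ^ 2 < 2 := by
      rw [div_pow, div_lt_iff₀ (by positivity)]
      nlinarith
    have := Real.log_lt_log (by positivity) hsq
    rw [Real.log_pow] at this
    push_cast at this
    linarith
  · intro _
    have hlt : ((d : ℝ) + 3) / ((d : ℝ) - 1) < 2 := by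
      rw [div_lt_iff₀ (by linarith)]
      linarith
    have := Real.log_lt_log (div_pos (by linarith) (by linarith)) hlt
    linarith
end
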